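/- (Endpoint values, Shabat-type property) In the DJKM setting with parameter β ≠ ±1, for all n ≥ 0, bₙ(1) = bₙ(−1) = (−1)^{n/2}·√((β+1)/2) if n is even, and bₙ(1) = bₙ(−1) = 0 if n is odd. Here for even n, (−1)^{n/2} means (−1) raised to n/2. -/

import Mathlib

open Polynomial

/-- Endpoint values of the `bₙ` in the DJKM setting (Shabat-type property). -/
theorem djkm_endpoint_values (β s c : ℂ) (hβ1 : β ≠ 1) (hβ2 : β ≠ -1)
    (hs : s ^ 2 = 2 * (β - 1)) (hc : c ^ 2 = (β + 1) / 2)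
    (p : Polynomial ℂ)
    (hp : p = C ((β ^ 2 - 1)⁻¹) * (X ^ 4 - C (2 * β) * X ^ 2 + 1))
    (a b : ℕ → Polynomial ℂ)
    (ha1 : a 1 = C s⁻¹ * (X ^ 2 - 1))
    (hb0 : b 0 = C c)
    (ha0 : a 0 = 1)
    (hdef : ∀ n : ℕ,
      AdjoinRoot.of ((X : Polynomial (Polynomial ℂ)) ^ 2 - C p) (a (n + 1)) +
        AdjoinRoot.of (X ^ 2 - C p) (b n) * AdjoinRoot.root (X ^ 2 - C p) =
      (AdjoinRoot.of (X ^ 2 - C p) (a 1) +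
        AdjoinRoot.of (X ^ 2 - C p) (b 0) * AdjoinRoot.root (X ^ 2 - C p)) ^ (n + 1)) :
    ∀ n : ℕ,
      (b n).eval 1 = (b n).eval (-1) ∧
      (Even n → (b n).eval 1 = (-1) ^ (n / 2) * c) ∧
      (Odd n → (b n).eval 1 = 0) := by
  have hβ1' : β - 1 ≠ 0 := sub_ne_zero.mpr hβ1
  have hβ2' : β + 1 ≠ 0 := fun h => hβ2 (by linear_combination h)
  have hβp : β ^ 2 - 1 ≠ 0 := by
    intro h
    rcases mul_eq_zero.mp (show (β - 1) * (β + 1) = 0 by linear_combination h) with h' | h'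
    · exact hβ1' h'
    · exact hβ2' h'
  have hc0 : c ≠ 0 := by
    intro h
    apply hβ2'
    have := hc
    rw [h] at this
    field_simp at this
    linear_combination -this
  set r : ℂ := Complex.I / c with hr
  have hcr : c * r = Complex.I := by
    rw [hr]
    field_simp
  have hr0 : r ≠ 0 := by
    simp [hr, Complex.I_ne_zero, hc0]
  have hr2 : r ^ 2 = p.eval 1 := by
    rw [hp]
    simp only [eval_mul, eval_add, eval_sub, eval_pow, eval_C, eval_X, eval_one, hr]
    field_simp
    linear_combination (2*β - 2) * hc + (β ^ 2 - 1) * Complex.I_sq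
  have hr2' : r ^ 2 = p.eval (-1) := by
    rw [hp]
    simp only [eval_mul, eval_add, eval_sub, eval_pow, eval_C, eval_X, eval_one, hr]
    field_simp
    linear_combination (2*β - 2) * hc + (β ^ 2 - 1) * Complex.I_sq
  have ha11 : (a 1).eval 1 = 0 := by simp [ha1]
  have ha1m : (a 1).eval (-1) = 0 := by simp [ha1]
  have key : ∀ (t₀ r' : ℂ), r' ^ 2 = p.eval t₀ → ∀ n : ℕ,
      (a (n + 1)).eval t₀ + (b n).eval t₀ * r' =
        ((a 1).eval t₀ + c * r') ^ (n + 1) := by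
    intro t₀ r' hrr n
    have h0 : (X ^ 2 - C p).eval₂ (evalRingHom t₀ : Polynomial ℂ →+* ℂ) r' = 0 := by
      simp [hrr]
    have := congrArg (AdjoinRoot.lift (evalRingHom t₀) r' h0) (hdef n)
    simpa [map_add, map_mul, map_pow, AdjoinRoot.lift_of, AdjoinRoot.lift_root, hb0] using this
  have hbval : ∀ (t₀ : ℂ), r ^ 2 = p.eval t₀ → (a 1).eval t₀ = 0 → ∀ n : ℕ,
      (b n).eval t₀ * (2 * r) = Complex.I ^ (n + 1) - (-Complex.I) ^ (n + 1) := by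
    intro t₀ hrr ha0' n
    have h1 := key t₀ r hrr n
    have h2 := key t₀ (-r) (by rw [neg_pow]; simpa using hrr) n
    rw [ha0', zero_add, hcr] at h1
    rw [ha0', zero_add] at h2
    have hcr' : c * -r = -Complex.I := by rw [mul_neg, hcr]
    rw [hcr'] at h2
    linear_combination h1 - h2
  have h2r : (2 : ℂ) * r ≠ 0 := mul_ne_zero two_ne_zero hr0
  intro n
  have e1 := hbval 1 hr2 ha11 n
  have e2 := hbval (-1) hr2' ha1m n
  refine ⟨mul_right_cancel₀ h2r (e1.trans e2.symm), ?_, ?_⟩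
  · rintro ⟨k, hk⟩
    have hn : n = 2 * k := by omega
    have hdiv : n / 2 = k := by omega
    subst hn
    rw [hdiv]
    apply mul_right_cancel₀ h2r
    rw [e1]
    have : (-Complex.I) ^ (2 * k + 1) = -(Complex.I ^ (2 * k + 1)) := by
      rw [neg_pow]
      simp [pow_succ, pow_mul]
    rw [this]
    have hIk : Complex.I ^ (2 * k + 1) = (-1 : ℂ) ^ k * Complex.I := by
      rw [pow_succ, pow_mul, Complex.I_sq]
    rw [hIk]
    field_simp [hr]
    ring
    rw [hcr]
  · rintro ⟨k, hk⟩
    subst hk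
    have : (-Complex.I) ^ (2 * k + 1 + 1) = Complex.I ^ (2 * k + 1 + 1) :=
      Even.neg_pow ⟨k + 1, by ring⟩ _
    rw [this, sub_self] at e1
    exact (mul_eq_zero.mp e1).resolve_right h2r
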